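/- Every undirected door can simulate a diode: wiring a path through the opening tunnel, then through the traverse tunnel, then through the closing tunnel yields a system with two external locations in which the agent can traverse from the first external location to the second (by opening, traversing, and closing the door) but can never traverse from the second to the first (entering that way closes the traverse tunnel before it can be used). -/

import Mathlib

/-- A 1-player gadget: a finite set of states, a finite set of locations,
and a set of traversals between state–location pairs. -/
structure Gadget where
  State : Type
  Loc : Type
  stateFin : Fintype State
  locFin : Fintype Loc
  trav : (State × Loc) → (State × Loc) → Prop

open Classical in
/-- Update the state of one gadget instance in a global state. -/
noncomputable def updState {ι St : Type} (σg : ι → St) (i : ι) (s : St) : ι → St :=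
  fun j => if j = i then s else σg j

/-- A system of copies of the gadget `G`: a finite collection of instances together with
symmetric connections (pairings of locations) along which the agent moves freely. -/
structure System (G : Gadget) where
  ι : Type
  instFin : Fintype ι
  conn : (ι × G.Loc) → (ι × G.Loc) → Prop
  conn_symm : ∀ x y, conn x y → conn y x

/-- A single move of the agent in a system: a traversal inside one instance
(changing only that instance's state), or a free move along a connection. -/
inductive SysStep (G : Gadget) (S : System G) :
    ((S.ι → G.State) × (S.ι × G.Loc)) → ((S.ι → G.State) × (S.ι × G.Loc)) → Prop
  | trav {σg : S.ι → G.State} {i : S.ι} {a b : G.Loc} {s' : G.State} :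
      G.trav (σg i, a) (s', b) →
      SysStep G S (σg, (i, a)) (updState σg i s', (i, b))
  | move {σg : S.ι → G.State} {x y : S.ι × G.Loc} :
      S.conn x y → SysStep G S (σg, x) (σg, y)

/-- `Simulates G' G` : there is a system of copies of `G'`, with external locations
identified (injectively) with the locations of `G` and an injective encoding of the
states of `G` as global states, whose reachability behavior between external locations
in encoded global states is exactly the transitive closure of `G`. -/
def Simulates (G' G : Gadget) : Prop :=
  ∃ S : System G', ∃ ext : G.Loc → S.ι × G'.Loc, ∃ enc : G.State → (S.ι → G'.State),
    Function.Injective ext ∧ Function.Injective enc ∧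
    ∀ s s' a b,
      Relation.ReflTransGen (SysStep G' S) (enc s, ext a) (enc s', ext b) ↔
      Relation.ReflTransGen G.trav (s, a) (s', b)

/-! ### Doors.  State `true` = open, `false` = closed.
A direction flag `true` means the corresponding tunnel is directed,
`false` that it is undirected. -/

/-- Locations of a door with an opening tunnel: entrance/exit of the opening (`O`),
traverse (`T`) and closing (`C`) tunnels. -/
inductive DoorLoc | O0 | O1 | T0 | T1 | C0 | C1
deriving DecidableEq

instance : Fintype DoorLoc :=
  Fintype.ofList [DoorLoc.O0, DoorLoc.O1, DoorLoc.T0, DoorLoc.T1, DoorLoc.C0, DoorLoc.C1] (by intro x; cases x <;> simp)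

/-- Traversals of a door with an opening tunnel; `dO`, `dT`, `dC` record whether the
opening, traverse, closing tunnels are directed. -/
def doorTrav (dO dT dC : Bool) : (Bool × DoorLoc) → (Bool × DoorLoc) → Prop := fun x y =>
  (x.2 = DoorLoc.O0 ∧ y = (true, DoorLoc.O1)) ∨
  (dO = false ∧ x.2 = DoorLoc.O1 ∧ y = (true, DoorLoc.O0)) ∨
  (x.1 = true ∧ x.2 = DoorLoc.T0 ∧ y = (true, DoorLoc.T1)) ∨
  (dT = false ∧ x.1 = true ∧ x.2 = DoorLoc.T1 ∧ y = (true, DoorLoc.T0)) ∨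
  (x.2 = DoorLoc.C0 ∧ y = (false, DoorLoc.C1)) ∨
  (dC = false ∧ x.2 = DoorLoc.C1 ∧ y = (false, DoorLoc.C0))

/-- The door with an opening tunnel (an open-required door). -/
def doorGadget (dO dT dC : Bool) : Gadget :=
  ⟨Bool, DoorLoc, inferInstance, inferInstance, doorTrav dO dT dC⟩

/-- Locations of an open-optional door: opening port `O` plus traverse and closing tunnels. -/
inductive ODoorLoc | O | T0 | T1 | C0 | C1
deriving DecidableEq

instance : Fintype ODoorLoc :=
  Fintype.ofList [ODoorLoc.O, ODoorLoc.T0, ODoorLoc.T1, ODoorLoc.C0, ODoorLoc.C1] (by intro x; cases x <;> simp)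

/-- Traversals of an open-optional door: a visit to the opening port `O` sets the state
to open; `dT`, `dC` record whether the traverse and closing tunnels are directed. -/
def openOptDoorTrav (dT dC : Bool) : (Bool × ODoorLoc) → (Bool × ODoorLoc) → Prop := fun x y =>
  (x.2 = ODoorLoc.O ∧ y = (true, ODoorLoc.O)) ∨
  (x.1 = true ∧ x.2 = ODoorLoc.T0 ∧ y = (true, ODoorLoc.T1)) ∨
  (dT = false ∧ x.1 = true ∧ x.2 = ODoorLoc.T1 ∧ y = (true, ODoorLoc.T0)) ∨
  (x.2 = ODoorLoc.C0 ∧ y = (false, ODoorLoc.C1)) ∨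
  (dC = false ∧ x.2 = ODoorLoc.C1 ∧ y = (false, ODoorLoc.C0))

/-- The open-optional door. -/
def openOptDoorGadget (dT dC : Bool) : Gadget :=
  ⟨Bool, ODoorLoc, inferInstance, inferInstance, openOptDoorTrav dT dC⟩

/-- A diode: a 1-state gadget with one always-traversable directed tunnel. -/
inductive DiodeLoc | inp | out
deriving DecidableEq

instance : Fintype DiodeLoc :=
  Fintype.ofList [DiodeLoc.inp, DiodeLoc.out] (by intro x; cases x <;> simp)

def diode : Gadget :=
  ⟨Unit, DiodeLoc, inferInstance, inferInstance,
    fun x y => x.2 = DiodeLoc.inp ∧ y.2 = DiodeLoc.out⟩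

/-- Locations of an open-required normal self-closing door. -/
inductive SCDLoc | O0 | O1 | T0 | T1
deriving DecidableEq

instance : Fintype SCDLoc :=
  Fintype.ofList [SCDLoc.O0, SCDLoc.O1, SCDLoc.T0, SCDLoc.T1] (by intro x; cases x <;> simp)

/-- Open-required normal self-closing door: opening tunnel `O` (always traversable, sets
the state to open), self-closing tunnel `T` (traversable exactly when open, sets closed). -/
def nSCDTrav (dO dT : Bool) : (Bool × SCDLoc) → (Bool × SCDLoc) → Prop := fun x y =>
  (x.2 = SCDLoc.O0 ∧ y = (true, SCDLoc.O1)) ∨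
  (dO = false ∧ x.2 = SCDLoc.O1 ∧ y = (true, SCDLoc.O0)) ∨
  (x.1 = true ∧ x.2 = SCDLoc.T0 ∧ y = (false, SCDLoc.T1)) ∨
  (dT = false ∧ x.1 = true ∧ x.2 = SCDLoc.T1 ∧ y = (false, SCDLoc.T0))

def nSCD (dO dT : Bool) : Gadget :=
  ⟨Bool, SCDLoc, inferInstance, inferInstance, nSCDTrav dO dT⟩

/-- Locations of an open-optional normal self-closing door. -/
inductive OOSCDLoc | O | T0 | T1
deriving DecidableEq

instance : Fintype OOSCDLoc :=
  Fintype.ofList [OOSCDLoc.O, OOSCDLoc.T0, OOSCDLoc.T1] (by intro x; cases x <;> simp)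

/-- Open-optional normal self-closing door: opening port `O` (visit sets the state to
open), self-closing tunnel `T` (traversable exactly when open, sets the state closed). -/
def ooSCDTrav (dT : Bool) : (Bool × OOSCDLoc) → (Bool × OOSCDLoc) → Prop := fun x y =>
  (x.2 = OOSCDLoc.O ∧ y = (true, OOSCDLoc.O)) ∨
  (x.1 = true ∧ x.2 = OOSCDLoc.T0 ∧ y = (false, OOSCDLoc.T1)) ∨
  (dT = false ∧ x.1 = true ∧ x.2 = OOSCDLoc.T1 ∧ y = (false, OOSCDLoc.T0))

def ooSCD (dT : Bool) : Gadget :=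
  ⟨Bool, OOSCDLoc, inferInstance, inferInstance, ooSCDTrav dT⟩

/-- Locations of a symmetric self-closing door. -/
inductive SymSCDLoc | A0 | A1 | B0 | B1
deriving DecidableEq

instance : Fintype SymSCDLoc :=
  Fintype.ofList [SymSCDLoc.A0, SymSCDLoc.A1, SymSCDLoc.B0, SymSCDLoc.B1] (by intro x; cases x <;> simp)

/-- Symmetric self-closing door: self-opening tunnel `A` (traversable exactly when closed,
sets the state open), self-closing tunnel `B` (traversable exactly when open, sets closed). -/
def symSCDTrav (dA dB : Bool) : (Bool × SymSCDLoc) → (Bool × SymSCDLoc) → Prop := fun x y =>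
  (x.1 = false ∧ x.2 = SymSCDLoc.A0 ∧ y = (true, SymSCDLoc.A1)) ∨
  (dA = false ∧ x.1 = false ∧ x.2 = SymSCDLoc.A1 ∧ y = (true, SymSCDLoc.A0)) ∨
  (x.1 = true ∧ x.2 = SymSCDLoc.B0 ∧ y = (false, SymSCDLoc.B1)) ∨
  (dB = false ∧ x.1 = true ∧ x.2 = SymSCDLoc.B1 ∧ y = (false, SymSCDLoc.B0))

def symSCD (dA dB : Bool) : Gadget :=
  ⟨Bool, SymSCDLoc, inferInstance, inferInstance, symSCDTrav dA dB⟩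

/-- The system: one copy of the undirected door, with `O1`–`T0` and `T1`–`C0` connected. -/
def doorSys : System (doorGadget false false false) where
  ι := Unit
  instFin := inferInstance
  conn := fun x y =>
    (x.2 = DoorLoc.O1 ∧ y.2 = DoorLoc.T0) ∨ (x.2 = DoorLoc.T0 ∧ y.2 = DoorLoc.O1) ∨
    (x.2 = DoorLoc.T1 ∧ y.2 = DoorLoc.C0) ∨ (x.2 = DoorLoc.C0 ∧ y.2 = DoorLoc.T1)
  conn_symm := by tauto

lemma upd_eq (σ : Unit → Bool) (s : Bool) : updState σ () s = fun _ => s := by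
  funext j; simp [updState]

def doorExt : DiodeLoc → Unit × DoorLoc
  | DiodeLoc.inp => ((), DoorLoc.O0)
  | DiodeLoc.out => ((), DoorLoc.C1)

/-- Invariant satisfied by every configuration reachable from the closed door at `C1`. -/
def badInv (c : (Unit → Bool) × (Unit × DoorLoc)) : Prop :=
  c.1 = (fun _ => false) ∧
    (c.2.2 = DoorLoc.C1 ∨ c.2.2 = DoorLoc.C0 ∨ c.2.2 = DoorLoc.T1)

lemma inv_step {c d} (h : SysStep (doorGadget false false false) doorSys c d)
    (hc : badInv c) : badInv d := by
  cases h with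
  | @trav σg i a b s' ht =>
    obtain ⟨h1, h2⟩ := hc
    subst h1
    rcases h2 with h2 | h2 | h2 <;> simp at h2 <;> subst h2 <;>
      simp [doorGadget, doorTrav, Gadget.trav] at ht
    · obtain ⟨hs, hb⟩ := Prod.mk.inj ht
      subst hs; subst hb
      exact ⟨upd_eq _ _, Or.inr (Or.inl rfl)⟩
    · obtain ⟨hs, hb⟩ := Prod.mk.inj ht
      subst hs; subst hb
      exact ⟨upd_eq _ _, Or.inl rfl⟩
  | @move σg x y hcon =>
    obtain ⟨h1, h2⟩ := hc
    rcases hcon with ⟨hx, hy⟩ | ⟨hx, hy⟩ | ⟨hx, hy⟩ | ⟨hx, hy⟩ <;>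
      simp_all [badInv]

lemma door_path :
    Relation.ReflTransGen (SysStep (doorGadget false false false) doorSys)
      ((fun _ => false), ((), DoorLoc.O0)) ((fun _ => false), ((), DoorLoc.C1)) := by
  have h1 : SysStep (doorGadget false false false) doorSys
      ((fun _ => false), ((), DoorLoc.O0)) ((fun _ => true), ((), DoorLoc.O1)) := by
    have := SysStep.trav (G := doorGadget false false false) (S := doorSys)
      (σg := fun _ => false) (i := ()) (a := DoorLoc.O0) (b := DoorLoc.O1) (s' := true)
      (Or.inl ⟨rfl, rfl⟩)
    erw [upd_eq] at this; exact this
  have h2 : SysStep (doorGadget false false false) doorSys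
      ((fun _ => true), ((), DoorLoc.O1)) ((fun _ => true), ((), DoorLoc.T0)) :=
    SysStep.move (Or.inl ⟨rfl, rfl⟩)
  have h3 : SysStep (doorGadget false false false) doorSys
      ((fun _ => true), ((), DoorLoc.T0)) ((fun _ => true), ((), DoorLoc.T1)) := by
    have := SysStep.trav (G := doorGadget false false false) (S := doorSys)
      (σg := fun _ => true) (i := ()) (a := DoorLoc.T0) (b := DoorLoc.T1) (s' := true)
      (Or.inr (Or.inr (Or.inl ⟨rfl, rfl, rfl⟩)))
    erw [upd_eq] at this; exact this
  have h4 : SysStep (doorGadget false false false) doorSys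
      ((fun _ => true), ((), DoorLoc.T1)) ((fun _ => true), ((), DoorLoc.C0)) :=
    SysStep.move (Or.inr (Or.inr (Or.inl ⟨rfl, rfl⟩)))
  have h5 : SysStep (doorGadget false false false) doorSys
      ((fun _ => true), ((), DoorLoc.C0)) ((fun _ => false), ((), DoorLoc.C1)) := by
    have := SysStep.trav (G := doorGadget false false false) (S := doorSys)
      (σg := fun _ => true) (i := ()) (a := DoorLoc.C0) (b := DoorLoc.C1) (s' := false)
      (Or.inr (Or.inr (Or.inr (Or.inr (Or.inl ⟨rfl, rfl⟩)))))
    erw [upd_eq] at this; exact this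
  exact (((((Relation.ReflTransGen.refl.tail h1).tail h2).tail h3).tail h4).tail h5)

/-- Every undirected door can simulate a diode. -/
theorem undirected_door_simulates_diode :
    Simulates (doorGadget false false false) diode := by
  refine ⟨doorSys, doorExt, fun _ _ => false, ?_, ?_, ?_⟩
  · intro x y h
    cases x <;> cases y <;> simp [doorExt] at h ⊢ <;> cases (Prod.mk.inj h).2 <;> rfl
  · intro x y _; rfl
  · intro s s' a b
    have hinv : ∀ c d, Relation.ReflTransGen (SysStep (doorGadget false false false) doorSys) c d →
        badInv c → badInv d := by
      intro c d h
      induction h with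
      | refl => exact id
      | tail _ hstep ih => exact fun hc => inv_step hstep (ih hc)
    have hout : ∀ p q, Relation.ReflTransGen diode.trav p q →
        p.2 = DiodeLoc.out → q.2 = DiodeLoc.out := by
      intro p q h
      induction h with
      | refl => exact id
      | tail _ hstep ih =>
        intro hp
        have := hstep.1
        rw [ih hp] at this
        exact absurd this (by simp)
    cases a <;> cases b
    · constructor
      · intro _; exact Relation.ReflTransGen.refl
      · intro _; exact Relation.ReflTransGen.refl
    · constructor
      · intro _; exact Relation.ReflTransGen.single ⟨rfl, rfl⟩
      · intro _; exact door_path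
    · constructor
      · intro h
        exfalso
        have := hinv _ _ h ⟨rfl, Or.inl rfl⟩
        simpa [badInv, doorExt] using this.2
      · intro h
        exfalso
        have := hout _ _ h rfl
        simp at this
    · constructor
      · intro _; exact Relation.ReflTransGen.refl
      · intro _; exact Relation.ReflTransGen.refl
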